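/- arXiv:1207.3629 — 2 statements merged into one kernel-verified Lean document; each statement's English description precedes it below -/
import Mathlib

section
/- The dual of an arithmetic matroid is an arithmetic matroid: if (M,m) satisfies axioms (A1), (A2) and (P), then the pair (M*, m*) with rk*(A) = |A| - rk(E) + rk(E∖A) and m*(A) = m(E∖A) also satisfies (A1), (A2) and (P). -/
/-- `[R, R ∪ F ∪ T]` is a molecule for the (integer-valued) rank function `rk`. -/
def IsMoleculeWith {α : Type*} [DecidableEq α] (rk : Finset α → ℤ)
    (R F T : Finset α) : Prop :=
  Disjoint R F ∧ Disjoint R T ∧ Disjoint F T ∧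
  ∀ A : Finset α, R ⊆ A → A ⊆ R ∪ F ∪ T → rk A = rk R + (A ∩ F).card

/-- `ρ(R,S) = (-1)^{|T|} Σ_{A ∈ [R,S]} (-1)^{|S|-|A|} m(A)`, where `T` is the dependent
part of the molecule `[R,S]`. -/
def rho {α : Type*} [DecidableEq α] (m : Finset α → ℕ) (T R S : Finset α) : ℤ :=
  (-1) ^ T.card * ∑ A ∈ Finset.Icc R S, (-1) ^ (S.card - A.card) * (m A : ℤ)

/-- The axioms (A1), (A2), (P) of an arithmetic matroid, for a rank function `rk` and a
multiplicity function `m` on subsets of a finite ground set. -/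
def IsArithmeticMatroid {α : Type*} [Fintype α] [DecidableEq α]
    (rk : Finset α → ℤ) (m : Finset α → ℕ) : Prop :=
  -- matroid rank axioms
  (rk ∅ = 0) ∧
  (∀ A B : Finset α, A ⊆ B → rk A ≤ rk B) ∧
  (∀ A B : Finset α, rk (A ∪ B) + rk (A ∩ B) ≤ rk A + rk B) ∧
  (∀ (A : Finset α) (e : α), rk (insert e A) ≤ rk A + 1) ∧
  -- (A1)
  (∀ (A : Finset α) (e : α), e ∉ A →
    (rk (insert e A) = rk A → m (insert e A) ∣ m A) ∧
    (rk (insert e A) ≠ rk A → m A ∣ m (insert e A))) ∧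
  -- (A2)
  (∀ R F T : Finset α, IsMoleculeWith rk R F T →
    m R * m (R ∪ F ∪ T) = m (R ∪ F) * m (R ∪ T)) ∧
  -- (P)
  (∀ R F T : Finset α, IsMoleculeWith rk R F T → 0 ≤ rho m T R (R ∪ F ∪ T))

lemma AM.rk_union_le_card {α : Type*} [DecidableEq α] (rk : Finset α → ℤ)
    (hunit : ∀ (A : Finset α) (e : α), rk (insert e A) ≤ rk A + 1)
    (Y s : Finset α) : rk (Y ∪ s) ≤ rk Y + s.card := by
  induction s using Finset.induction_on with
  | empty => simp
  | insert _ _ he ih =>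
      rename_i e s
      rw [Finset.union_insert]
      have h1 := hunit (Y ∪ s) e
      rw [Finset.card_insert_of_notMem he]
      push_cast
      linarith

lemma AM.rk_le_of_subset_card {α : Type*} [DecidableEq α] (rk : Finset α → ℤ)
    (hunit : ∀ (A : Finset α) (e : α), rk (insert e A) ≤ rk A + 1)
    {X Y : Finset α} (h : Y ⊆ X) : rk X ≤ rk Y + X.card - Y.card := by
  have h1 := AM.rk_union_le_card rk hunit Y (X \ Y)
  rw [Finset.union_sdiff_of_subset h, Finset.card_sdiff_of_subset h,
    Nat.cast_sub (Finset.card_le_card h)] at h1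
  linarith

lemma AM.neg_one_pow_congr (a b : ℕ) (h : a % 2 = b % 2) : ((-1:ℤ))^a = (-1)^b := by
  rcases Nat.even_or_odd a with ha | ha
  · have hb : Even b := by rw [Nat.even_iff] at *; omega
    rw [ha.neg_one_pow, hb.neg_one_pow]
  · have hb : Odd b := by rw [Nat.odd_iff] at *; omega
    rw [ha.neg_one_pow, hb.neg_one_pow]

lemma AM.dual_molecule {α : Type*} [Fintype α] [DecidableEq α] (rk : Finset α → ℤ)
    {R F T : Finset α}
    (hM : IsMoleculeWith (fun A => (A.card : ℤ) - rk Finset.univ + rk (Finset.univ \ A)) R F T) :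
    IsMoleculeWith rk (Finset.univ \ (R ∪ F ∪ T)) T F := by
  obtain ⟨hRF, hRT, hFT, heq⟩ := hM
  refine ⟨?_, ?_, hFT.symm, ?_⟩
  · exact Finset.sdiff_disjoint.mono_right (by intro x hx; simp [hx])
  · exact Finset.sdiff_disjoint.mono_right (by intro x hx; simp [hx])
  · intro B hRB hBS
    set R' := Finset.univ \ (R ∪ F ∪ T) with hR'def
    set A := Finset.univ \ B with hAdef
    have hdRF := Finset.disjoint_left.mp hRF
    have hdRT := Finset.disjoint_left.mp hRT
    have hdFT := Finset.disjoint_left.mp hFT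
    have hcompl : Finset.univ \ A = B := by
      rw [hAdef, Finset.sdiff_sdiff_self_left, Finset.univ_inter]
    have hBR : Disjoint B R := by
      refine Finset.disjoint_left.mpr ?_
      intro x hxB hxR
      have := hBS hxB
      simp only [hR'def, Finset.mem_union, Finset.mem_sdiff, Finset.mem_univ, true_and] at this
      rcases this with (h1 | h1) | h1
      · exact h1 (by simp [hxR])
      · exact hdRT hxR h1
      · exact hdRF hxR h1
    have hRA : R ⊆ A := Finset.subset_sdiff.mpr ⟨Finset.subset_univ _, hBR.symm⟩
    have hAS : A ⊆ R ∪ F ∪ T := by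
      have h1 : A ⊆ Finset.univ \ R' := Finset.sdiff_subset_sdiff (le_refl _) hRB
      have h2 : Finset.univ \ R' = R ∪ F ∪ T := by
        rw [hR'def, Finset.sdiff_sdiff_self_left, Finset.univ_inter]
      rwa [h2] at h1
    have eqA := heq A hRA hAS
    have eqS := heq (R ∪ F ∪ T) (by intro x hx; simp [hx]) (le_refl _)
    simp only [hcompl] at eqA
    have hcA : A.card = Finset.univ.card - B.card := Finset.card_sdiff_of_subset (Finset.subset_univ _)
    have hcB : B.card ≤ Finset.univ.card := Finset.card_le_univ _
    have hAF : A ∩ F = F \ B := by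
      ext x; simp only [hAdef, Finset.mem_inter, Finset.mem_sdiff, Finset.mem_univ, true_and]
      tauto
    have hAF2 : (A ∩ F).card + (B ∩ F).card = F.card := by
      rw [hAF, Finset.inter_comm B F]
      exact Finset.card_sdiff_add_card_inter F B
    have hSF : (R ∪ F ∪ T) ∩ F = F := by
      ext x; simp only [Finset.mem_inter, Finset.mem_union]; tauto
    have hcS : (R ∪ F ∪ T).card = R.card + F.card + T.card := by
      rw [Finset.card_union_of_disjoint, Finset.card_union_of_disjoint hRF]
      exact Finset.disjoint_union_left.mpr ⟨hRT, hFT⟩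
    have hcR' : R'.card = Finset.univ.card - (R ∪ F ∪ T).card :=
      Finset.card_sdiff_of_subset (Finset.subset_univ _)
    have hcSu : (R ∪ F ∪ T).card ≤ Finset.univ.card := Finset.card_le_univ _
    have hBdec : B = R' ∪ (B ∩ T) ∪ (B ∩ F) := by
      ext x
      have h1 := @hBS x
      have h2 := @hRB x
      simp only [Finset.mem_union, Finset.mem_inter] at *
      tauto
    have hcBdec : B.card = R'.card + (B ∩ T).card + (B ∩ F).card := by
      have d1 : Disjoint R' (B ∩ T) :=
        (Finset.sdiff_disjoint.mono_right (by intro x hx; simp [hx] : T ⊆ R ∪ F ∪ T)).mono_right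
          Finset.inter_subset_right
      have d2 : Disjoint R' (B ∩ F) :=
        (Finset.sdiff_disjoint.mono_right (by intro x hx; simp [hx] : F ⊆ R ∪ F ∪ T)).mono_right
          Finset.inter_subset_right
      have d3 : Disjoint (B ∩ T) (B ∩ F) :=
        ((hFT.symm).mono_left Finset.inter_subset_right).mono_right Finset.inter_subset_right
      conv_lhs => rw [hBdec]
      rw [Finset.card_union_of_disjoint (Finset.disjoint_union_left.mpr ⟨d2, d3⟩),
        Finset.card_union_of_disjoint d1]
    rw [hSF] at eqS
    simp only at eqA eqS
    have hcA' : (A.card : ℤ) = (((Finset.univ : Finset α)).card : ℤ) - B.card := by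
      rw [hcA, Nat.cast_sub hcB]
    have hAF2' : ((A ∩ F).card : ℤ) + (B ∩ F).card = F.card := by exact_mod_cast hAF2
    have hcS' : ((R ∪ F ∪ T).card : ℤ) = R.card + F.card + T.card := by exact_mod_cast hcS
    have hcR'' : (R'.card : ℤ) = (((Finset.univ : Finset α)).card : ℤ) - (R ∪ F ∪ T).card := by
      rw [hcR', Nat.cast_sub hcSu]
    have hcBdec' : (B.card : ℤ) = R'.card + (B ∩ T).card + (B ∩ F).card := by
      exact_mod_cast hcBdec
    linarith

/-- the dual of an arithmetic matroid, with rank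
`rk*(A) = |A| - rk(E) + rk(E∖A)` and multiplicity `m*(A) = m(E∖A)`, is again an
arithmetic matroid. -/
theorem dual_arithmetic_matroid {α : Type*} [Fintype α] [DecidableEq α]
    (rk : Finset α → ℤ) (m : Finset α → ℕ)
    (h : IsArithmeticMatroid rk m) :
    IsArithmeticMatroid
      (fun A => (A.card : ℤ) - rk Finset.univ + rk (Finset.univ \ A))
      (fun A => m (Finset.univ \ A)) := by
  obtain ⟨h0, hmono, hsub, hunit, hA1, hA2, hP⟩ := h
  have hdual := fun {R F T : Finset α}
      (hM : IsMoleculeWith (fun A => (A.card : ℤ) - rk Finset.univ + rk (Finset.univ \ A)) R F T)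
      => AM.dual_molecule rk hM
  refine ⟨?_, ?_, ?_, ?_, ?_, ?_, ?_⟩
  · simp
  · -- monotone
    intro A B hAB
    simp only
    have h1 : Finset.univ \ B ⊆ Finset.univ \ A := Finset.sdiff_subset_sdiff (le_refl _) hAB
    have h2 := AM.rk_le_of_subset_card rk hunit h1
    have hcA : ((Finset.univ \ A).card : ℤ) = (((Finset.univ : Finset α)).card : ℤ) - A.card := by
      rw [Finset.card_sdiff_of_subset (Finset.subset_univ _)]
      have h4 : A.card ≤ Finset.univ.card := Finset.card_le_card (Finset.subset_univ A); omega
    have hcB : ((Finset.univ \ B).card : ℤ) = (((Finset.univ : Finset α)).card : ℤ) - B.card := by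
      rw [Finset.card_sdiff_of_subset (Finset.subset_univ _)]
      have h4 : B.card ≤ Finset.univ.card := Finset.card_le_card (Finset.subset_univ B); omega
    have hc : (A.card : ℤ) ≤ B.card := by exact_mod_cast Finset.card_le_card hAB
    linarith
  · -- submodular
    intro A B
    simp only
    have h1 := hsub (Finset.univ \ A) (Finset.univ \ B)
    have e1 : (Finset.univ \ A) ∪ (Finset.univ \ B) = Finset.univ \ (A ∩ B) := by
      ext x
      simp only [Finset.mem_union, Finset.mem_inter, Finset.mem_sdiff, Finset.mem_univ, true_and]
      tauto
    have e2 : (Finset.univ \ A) ∩ (Finset.univ \ B) = Finset.univ \ (A ∪ B) := by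
      ext x
      simp only [Finset.mem_union, Finset.mem_inter, Finset.mem_sdiff, Finset.mem_univ, true_and]
      tauto
    rw [e1, e2] at h1
    have hc : (A ∪ B).card + (A ∩ B).card = A.card + B.card :=
      Finset.card_union_add_card_inter A B
    have hc' : ((A ∪ B).card : ℤ) + (A ∩ B).card = A.card + B.card := by exact_mod_cast hc
    linarith
  · -- unit increase
    intro A e
    simp only
    have h1 : rk (Finset.univ \ insert e A) ≤ rk (Finset.univ \ A) :=
      hmono _ _ (Finset.sdiff_subset_sdiff (le_refl _) (Finset.subset_insert _ _))
    have h2 : ((insert e A).card : ℤ) ≤ A.card + 1 := by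
      exact_mod_cast Finset.card_insert_le e A
    linarith
  · -- (A1)
    intro A e he
    simp only
    set B := Finset.univ \ insert e A with hBdef
    have heB : e ∉ B := by simp [hBdef]
    have hins : insert e B = Finset.univ \ A := by
      ext x
      simp only [hBdef, Finset.mem_insert, Finset.mem_sdiff, Finset.mem_univ, true_and,
        Finset.mem_insert]
      constructor
      · rintro (rfl | hx)
        · exact he
        · tauto
      · intro hx
        by_cases hxe : x = e
        · exact Or.inl hxe
        · exact Or.inr (by tauto)
    have hcard : ((insert e A).card : ℤ) = A.card + 1 := by
      rw [Finset.card_insert_of_notMem he]; push_cast; ring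
    rw [← hins]
    have hcases : rk (insert e B) = rk B ∨ rk (insert e B) = rk B + 1 := by
      have h1 : rk B ≤ rk (insert e B) := hmono _ _ (Finset.subset_insert _ _)
      have h2 := hunit B e
      omega
    constructor
    · intro heq
      rcases hcases with hc | hc
      · exfalso; rw [hc] at heq; linarith
      · exact (hA1 B e heB).2 (by omega)
    · intro hne
      rcases hcases with hc | hc
      · exact (hA1 B e heB).1 hc
      · exfalso; exact hne (by rw [hc, hcard]; ring)
  · -- (A2)
    intro R F T hM
    have hM' := hdual hM
    obtain ⟨hRF, hRT, hFT, _⟩ := hM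
    have hdRF := Finset.disjoint_left.mp hRF
    have hdRT := Finset.disjoint_left.mp hRT
    have hdFT := Finset.disjoint_left.mp hFT
    set R' := Finset.univ \ (R ∪ F ∪ T) with hR'def
    have key := hA2 _ _ _ hM'
    simp only
    have e1 : Finset.univ \ R = R' ∪ T ∪ F := by
      ext x; simp only [hR'def, Finset.mem_union, Finset.mem_sdiff, Finset.mem_univ, true_and]
      tauto
    have e2 : Finset.univ \ (R ∪ F) = R' ∪ T := by
      ext x; simp only [hR'def, Finset.mem_union, Finset.mem_sdiff, Finset.mem_univ, true_and]
      tauto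
    have e3 : Finset.univ \ (R ∪ T) = R' ∪ F := by
      ext x; simp only [hR'def, Finset.mem_union, Finset.mem_sdiff, Finset.mem_univ, true_and]
      tauto
    rw [e1, e2, e3]
    rw [mul_comm]
    exact key
  · -- (P)
    intro R F T hM
    have hM' := hdual hM
    obtain ⟨hRF, hRT, hFT, _⟩ := hM
    have hdRF := Finset.disjoint_left.mp hRF
    have hdRT := Finset.disjoint_left.mp hRT
    have hdFT := Finset.disjoint_left.mp hFT
    set R' := Finset.univ \ (R ∪ F ∪ T) with hR'def
    have hPr := hP _ _ _ hM'
    have hS' : R' ∪ T ∪ F = Finset.univ \ R := by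
      ext x; simp only [hR'def, Finset.mem_union, Finset.mem_sdiff, Finset.mem_univ, true_and]
      tauto
    have hcS : (R ∪ F ∪ T).card = R.card + F.card + T.card := by
      rw [Finset.card_union_of_disjoint, Finset.card_union_of_disjoint hRF]
      exact Finset.disjoint_union_left.mpr ⟨hRT, hFT⟩
    have hgoal : rho (fun A => m (Finset.univ \ A)) T R (R ∪ F ∪ T)
        = rho m F R' (R' ∪ T ∪ F) := by
      unfold rho
      rw [Finset.mul_sum, Finset.mul_sum]
      refine Finset.sum_nbij' (fun A => Finset.univ \ A) (fun B => Finset.univ \ B) ?_ ?_ ?_ ?_ ?_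
      · intro A hA
        rw [Finset.mem_Icc] at hA ⊢
        constructor
        · exact Finset.sdiff_subset_sdiff (le_refl _) hA.2
        · rw [hS']
          exact Finset.sdiff_subset_sdiff (le_refl _) hA.1
      · intro B hB
        rw [Finset.mem_Icc] at hB ⊢
        constructor
        · have h1 : Finset.univ \ (R' ∪ T ∪ F) ⊆ Finset.univ \ B :=
            Finset.sdiff_subset_sdiff (le_refl _) hB.2
          rwa [hS', Finset.sdiff_sdiff_self_left, Finset.univ_inter] at h1
        · have h1 : Finset.univ \ B ⊆ Finset.univ \ R' :=
            Finset.sdiff_subset_sdiff (le_refl _) hB.1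
          rwa [hR'def, Finset.sdiff_sdiff_self_left, Finset.univ_inter] at h1
      · intro A _
        show Finset.univ \ (Finset.univ \ A) = A
        rw [Finset.sdiff_sdiff_self_left, Finset.univ_inter]
      · intro B _
        show Finset.univ \ (Finset.univ \ B) = B
        rw [Finset.sdiff_sdiff_self_left, Finset.univ_inter]
      · intro A hA
        rw [Finset.mem_Icc] at hA
        rw [← mul_assoc, ← mul_assoc, ← pow_add, ← pow_add]
        have hc1 : R.card ≤ A.card := Finset.card_le_card hA.1
        have hc2 : A.card ≤ (R ∪ F ∪ T).card := Finset.card_le_card hA.2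
        have hc3 : ((Finset.univ : Finset α) \ A).card = (Finset.univ : Finset α).card - A.card :=
          Finset.card_sdiff_of_subset (Finset.subset_univ _)
        have hc4 : (R' ∪ T ∪ F).card = (Finset.univ : Finset α).card - R.card := by
          rw [hS']; exact Finset.card_sdiff_of_subset (Finset.subset_univ _)
        have hc5 : A.card ≤ (Finset.univ : Finset α).card :=
          Finset.card_le_card (Finset.subset_univ _)
        have hc6 : (R ∪ F ∪ T).card ≤ (Finset.univ : Finset α).card :=
          Finset.card_le_card (Finset.subset_univ _)
        rw [AM.neg_one_pow_congr (T.card + ((R ∪ F ∪ T).card - A.card))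
          (F.card + ((R' ∪ T ∪ F).card - (Finset.univ \ A).card)) (by omega)]
    rw [hgoal]
    exact hPr
end

section
/- Crapo's theorem for the multivariate Tutte polynomial: for a matroid M on a totally ordered ground set E with bases B, Z_M(q,v) = q^{-rk(E)} Σ_{B∈B} (Π_{b∈B} v_b)(Π_{e∈E(B)}(v_e+1))(Π_{i∈I(B)}(q/v_i + 1)). -/
open scoped Classical

/-- `B` is a basis of the matroid with rank function `rk`. -/
def IsBasis {α : Type*} [Fintype α] [DecidableEq α] (rk : Finset α → ℕ)
    (B : Finset α) : Prop :=
  rk B = B.card ∧ rk B = rk Finset.univ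

/-- Externally active elements of the basis `B`. -/
def extAct {α : Type*} [Fintype α] [LinearOrder α] (rk : Finset α → ℕ)
    (B : Finset α) : Finset α :=
  (Finset.univ \ B).filter
    (fun e => rk (insert e (B.filter (fun b => e < b))) = rk (B.filter (fun b => e < b)))

/-- Internally active elements of the basis `B`. -/
noncomputable def intAct {α : Type*} [Fintype α] [LinearOrder α] (rk : Finset α → ℕ)
    (B : Finset α) : Finset α :=
  B.filter (fun e => ∀ f : α, f < e → ¬ IsBasis rk (insert f (B.erase e)))


set_option linter.unusedSectionVars false
set_option linter.unusedVariables false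
set_option maxHeartbeats 1000000

section crapoAux
variable {α : Type*} [Fintype α] [LinearOrder α]

variable {α : Type*} [Fintype α] [LinearOrder α]

def greedyL (rk : Finset α → ℕ) : List α → Finset α → Finset α
  | [], S => S
  | e :: l, S => if rk (insert e S) = rk S then greedyL rk l S else greedyL rk l (insert e S)


variable {rk : Finset α → ℕ}

variable {α : Type*} [Fintype α] [LinearOrder α] {rk : Finset α → ℕ}

lemma mcr_sp_mono (hR1 : ∀ A B : Finset α, A ⊆ B → rk A ≤ rk B)
    (hR2 : ∀ A B : Finset α, rk (A ∪ B) + rk (A ∩ B) ≤ rk A + rk B)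
    {A B : Finset α} {e : α} (hAB : A ⊆ B) (h : rk (insert e A) = rk A) :
    rk (insert e B) = rk B := by
  have hsub : insert e B ⊆ B ∪ insert e A := by
    intro x hx
    rcases Finset.mem_insert.1 hx with rfl | hx
    · exact Finset.mem_union_right _ (Finset.mem_insert_self _ _)
    · exact Finset.mem_union_left _ hx
  have h1 : rk (insert e B) ≤ rk (B ∪ insert e A) := hR1 _ _ hsub
  have h2 : rk A ≤ rk (B ∩ insert e A) :=
    hR1 _ _ (Finset.subset_inter hAB (Finset.subset_insert _ _))
  have h3 := hR2 B (insert e A)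
  have h4 : rk B ≤ rk (insert e B) := hR1 _ _ (Finset.subset_insert _ _)
  omega

lemma mcr_rank_union_eq (hR1 : ∀ A B : Finset α, A ⊆ B → rk A ≤ rk B)
    (hR2 : ∀ A B : Finset α, rk (A ∪ B) + rk (A ∩ B) ≤ rk A + rk B)
    {A T : Finset α} (h : ∀ x ∈ T, rk (insert x A) = rk A) :
    rk (A ∪ T) = rk A := by
  induction T using Finset.induction with
  | empty => simp
  | @insert t T ht ih =>
    have h1 : rk (A ∪ T) = rk A := ih (fun x hx => h x (Finset.mem_insert_of_mem hx))
    have h2 : rk (insert t (A ∪ T)) = rk (A ∪ T) := by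
      have := mcr_sp_mono hR1 hR2 (Finset.subset_union_left (s₁ := A) (s₂ := T))
        (h t (Finset.mem_insert_self _ _))
      rw [h1] at this ⊢; exact this
    rw [Finset.union_insert, h2, h1]

lemma mcr_rank_union_le (hR3 : ∀ (A : Finset α) (e : α), rk (insert e A) ≤ rk A + 1)
    {A : Finset α} (T : Finset α) : rk (A ∪ T) ≤ rk A + T.card := by
  induction T using Finset.induction with
  | empty => simp
  | @insert t T ht ih =>
    rw [Finset.union_insert, Finset.card_insert_of_notMem ht]
    have := hR3 (A ∪ T) t
    omega

lemma mcr_rank_le_card (hR0 : rk ∅ = 0)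
    (hR3 : ∀ (A : Finset α) (e : α), rk (insert e A) ≤ rk A + 1)
    (A : Finset α) : rk A ≤ A.card := by
  have := mcr_rank_union_le (rk := rk) hR3 (A := ∅) A
  simpa [hR0] using this

lemma mcr_indep_subset (hR0 : rk ∅ = 0)
    (hR1 : ∀ A B : Finset α, A ⊆ B → rk A ≤ rk B)
    (hR3 : ∀ (A : Finset α) (e : α), rk (insert e A) ≤ rk A + 1)
    {B S : Finset α} (hB : rk B = B.card) (hS : S ⊆ B) : rk S = S.card := by
  have h1 : rk S ≤ S.card := mcr_rank_le_card hR0 hR3 S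
  have h2 : rk (S ∪ (B \ S)) ≤ rk S + (B \ S).card := mcr_rank_union_le hR3 _
  rw [Finset.union_sdiff_of_subset hS] at h2
  have h3 : (B \ S).card = B.card - S.card := Finset.card_sdiff_of_subset hS
  have h4 : S.card ≤ B.card := Finset.card_le_card hS
  omega


lemma greedy_subset_left : ∀ (l : List α) (S : Finset α), S ⊆ greedyL rk l S := by
  intro l
  induction l with
  | nil => intro S; simp [greedyL]
  | cons e t ih =>
    intro S
    rw [greedyL]
    split
    · exact ih S
    · exact (Finset.subset_insert _ _).trans (ih _)


lemma greedy_subset_right : ∀ (l : List α) (S : Finset α),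
    greedyL rk l S ⊆ S ∪ l.toFinset := by
  intro l
  induction l with
  | nil => intro S; simp [greedyL]
  | cons e t ih =>
    intro S
    rw [greedyL]
    split
    · exact (ih S).trans (Finset.union_subset_union_right (by simp [Finset.subset_insert]))
    · refine (ih _).trans ?_
      intro x hx
      rcases Finset.mem_union.1 hx with hx | hx
      · rcases Finset.mem_insert.1 hx with rfl | hx
        · simp
        · exact Finset.mem_union_left _ hx
      · exact Finset.mem_union_right _ (by simp [hx])


lemma greedy_reject : ∀ (l₁ : List α) (e : α) (l₂ : List α) (S : Finset α),
    e ∉ greedyL rk (l₁ ++ e :: l₂) S →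
    ∃ S', S ⊆ S' ∧ S' ⊆ greedyL rk (l₁ ++ e :: l₂) S ∧ S' ⊆ S ∪ l₁.toFinset ∧
      rk (insert e S') = rk S' := by
  intro l₁
  induction l₁ with
  | nil =>
    intro e l₂ S hres
    rw [List.nil_append, greedyL] at hres ⊢
    by_cases h : rk (insert e S) = rk S
    · rw [if_pos h] at hres ⊢
      exact ⟨S, le_refl _, greedy_subset_left _ _, by simp, h⟩
    · rw [if_neg h] at hres
      exact absurd (greedy_subset_left l₂ (insert e S) (Finset.mem_insert_self _ _)) hres
  | cons x t ih =>
    intro e l₂ S hres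
    rw [List.cons_append, greedyL] at hres ⊢
    by_cases h : rk (insert x S) = rk S
    · rw [if_pos h] at hres ⊢
      obtain ⟨S', h1, h2, h3, h4⟩ := ih e l₂ S hres
      exact ⟨S', h1, h2, h3.trans (Finset.union_subset_union_right (by simp [Finset.subset_insert])), h4⟩
    · rw [if_neg h] at hres ⊢
      obtain ⟨S', h1, h2, h3, h4⟩ := ih e l₂ (insert x S) hres
      refine ⟨S', (Finset.subset_insert _ _).trans h1, h2, ?_, h4⟩
      refine h3.trans ?_
      intro y hy
      rcases Finset.mem_union.1 hy with hy | hy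
      · rcases Finset.mem_insert.1 hy with rfl | hy
        · exact Finset.mem_union_right _ (by simp)
        · exact Finset.mem_union_left _ hy
      · exact Finset.mem_union_right _ (by simp [hy])


variable (hR0 : rk ∅ = 0)
  (hR1 : ∀ A B : Finset α, A ⊆ B → rk A ≤ rk B)
  (hR2 : ∀ A B : Finset α, rk (A ∪ B) + rk (A ∩ B) ≤ rk A + rk B)
  (hR3 : ∀ (A : Finset α) (e : α), rk (insert e A) ≤ rk A + 1)

include hR0 hR1 hR2 hR3


/-- removal lemma -/
lemma mcr_removal {B S : Finset α} {b e : α} (hB : rk B = B.card) (hSB : S ⊆ B)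
    (hbS : b ∈ S) (heB : e ∉ B)
    (heH : rk (insert e (B.erase b)) = rk (B.erase b))
    (heS : rk (insert e S) = rk S) :
    rk (insert e (S.erase b)) = rk (S.erase b) := by
  by_contra hne
  have hbB : b ∈ B := hSB hbS
  have hrkS : rk S = S.card := mcr_indep_subset hR0 hR1 hR3 hB hSB
  have hScard : 1 ≤ S.card := Finset.card_pos.2 ⟨b, hbS⟩
  have herase : rk (S.erase b) = (S.erase b).card :=
    mcr_indep_subset hR0 hR1 hR3 hB ((Finset.erase_subset _ _).trans hSB)
  have hcerase : (S.erase b).card = S.card - 1 := Finset.card_erase_of_mem hbS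
  have h1 : rk (insert e (S.erase b)) ≤ rk (S.erase b) + 1 := hR3 _ _
  have h2 : rk (S.erase b) ≤ rk (insert e (S.erase b)) := hR1 _ _ (Finset.subset_insert _ _)
  have h3 : rk (insert e (S.erase b)) = S.card := by omega
  -- insert e S = insert b (insert e (S.erase b))
  have hbe : e ≠ b := fun h => heB (h ▸ hbB)
  have hset : insert b (insert e (S.erase b)) = insert e S := by
    rw [Finset.insert_comm, Finset.insert_erase hbS]
  -- so b is spanned by insert e (S.erase b)
  have hspb : rk (insert b (insert e (S.erase b))) = rk (insert e (S.erase b)) := by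
    rw [hset, heS, h3, hrkS]
  -- monotonicity: b spanned by insert e (B.erase b)
  have hsub : insert e (S.erase b) ⊆ insert e (B.erase b) :=
    Finset.insert_subset_insert _ (fun x hx => by
      rcases Finset.mem_erase.1 hx with ⟨hx1, hx2⟩
      exact Finset.mem_erase.2 ⟨hx1, hSB hx2⟩)
  have hspb2 : rk (insert b (insert e (B.erase b))) = rk (insert e (B.erase b)) :=
    mcr_sp_mono hR1 hR2 hsub hspb
  have hset2 : insert b (insert e (B.erase b)) = insert e B := by
    rw [Finset.insert_comm, Finset.insert_erase hbB]
  have h5 : rk B ≤ rk (insert e B) := hR1 _ _ (Finset.subset_insert _ _)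
  have h6 : rk (B.erase b) ≤ (B.erase b).card := mcr_rank_le_card hR0 hR3 _
  have h7 : (B.erase b).card = B.card - 1 := Finset.card_erase_of_mem hbB
  have h8 : 1 ≤ B.card := Finset.card_pos.2 ⟨b, hbB⟩
  rw [hset2, heH] at hspb2
  omega

/-- iterated removal -/
lemma mcr_removal_all {B : Finset α} (hB : rk B = B.card) {e : α} (heB : e ∉ B)
    (D : Finset α) :
    ∀ S : Finset α, S ⊆ B →
    (∀ d ∈ D, d ∈ S → rk (insert e (B.erase d)) = rk (B.erase d)) →
    rk (insert e S) = rk S →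
    rk (insert e (S \ D)) = rk (S \ D) := by
  induction D using Finset.induction with
  | empty => intro S _ _ h; simpa using h
  | @insert d D hd ih =>
    intro S hSB hD heS
    have key : S \ insert d D = (S.erase d) \ D := by
      ext x; simp [Finset.mem_sdiff, Finset.mem_erase]; tauto
    rw [key]
    by_cases hdS : d ∈ S
    · exact ih _ ((Finset.erase_subset _ _).trans hSB)
        (fun x hx hxS => hD x (Finset.mem_insert_of_mem hx) (Finset.mem_of_mem_erase hxS))
        (mcr_removal hR0 hR1 hR2 hR3 hB hSB hdS heB (hD d (Finset.mem_insert_self _ _) hdS) heS)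
    · rw [Finset.erase_eq_of_notMem hdS]
      exact ih _ hSB (fun x hx hxS => hD x (Finset.mem_insert_of_mem hx) hxS) heS

/-- from non-basis replacement to span -/
lemma mcr_spans_of_not_basis {B : Finset α} (hB : IsBasis rk B) {b f : α} (hbB : b ∈ B)
    (hfb : f ≠ b) (h : ¬ IsBasis rk (insert f (B.erase b))) :
    rk (insert f (B.erase b)) = rk (B.erase b) := by
  by_cases hfB : f ∈ B
  · rw [Finset.insert_eq_self.2 (Finset.mem_erase.2 ⟨hfb, hfB⟩)]
  · obtain ⟨hB1, hB2⟩ := hB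
    have h1 : rk (B.erase b) = (B.erase b).card :=
      mcr_indep_subset hR0 hR1 hR3 hB1 (Finset.erase_subset _ _)
    have h2 : (B.erase b).card = B.card - 1 := Finset.card_erase_of_mem hbB
    have h8 : 1 ≤ B.card := Finset.card_pos.2 ⟨b, hbB⟩
    have h3 : rk (insert f (B.erase b)) ≤ rk (B.erase b) + 1 := hR3 _ _
    have h4 : rk (B.erase b) ≤ rk (insert f (B.erase b)) := hR1 _ _ (Finset.subset_insert _ _)
    have h5 : (insert f (B.erase b)).card = B.card := by
      rw [Finset.card_insert_of_notMem (fun hx => hfB (Finset.mem_of_mem_erase hx)), h2]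
      omega
    by_contra hne
    exact h ⟨by omega, by omega⟩



include hR1 hR2

lemma greedy_spans : ∀ (l : List α) (S : Finset α) (e : α), e ∈ l →
    rk (insert e (greedyL rk l S)) = rk (greedyL rk l S) := by
  intro l
  induction l with
  | nil => intro S e h; simp at h
  | cons x t ih =>
    intro S e he
    rw [greedyL]
    by_cases h : rk (insert x S) = rk S
    · rw [if_pos h]
      rcases List.mem_cons.1 he with rfl | het
      · exact mcr_sp_mono hR1 hR2 (greedy_subset_left t S) h
      · exact ih S e het
    · rw [if_neg h]
      rcases List.mem_cons.1 he with rfl | het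
      · rw [Finset.insert_eq_self.2
          ((greedy_subset_left t _) (Finset.mem_insert_self _ _))]
      · exact ih _ e het

omit hR2
include hR3

lemma greedy_card : ∀ (l : List α) (S : Finset α), rk S = S.card →
    rk (greedyL rk l S) = (greedyL rk l S).card := by
  intro l
  induction l with
  | nil => intro S h; simpa [greedyL] using h
  | cons x t ih =>
    intro S hS
    rw [greedyL]
    by_cases h : rk (insert x S) = rk S
    · rw [if_pos h]; exact ih S hS
    · rw [if_neg h]
      have hx : x ∉ S := fun hx => h (by rw [Finset.insert_eq_self.2 hx])
      have h1 : rk (insert x S) ≤ rk S + 1 := hR3 _ _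
      have h2 : rk S ≤ rk (insert x S) := hR1 _ _ (Finset.subset_insert _ _)
      exact ih _ (by rw [Finset.card_insert_of_notMem hx]; omega)

omit hR1 hR3

include hR0 hR1 hR2 hR3

lemma greedy_eq : ∀ (l : List α) (S B : Finset α), S ⊆ B → B ⊆ S ∪ l.toFinset →
    rk B = B.card →
    (∀ (l₁ : List α) (e : α) (l₂ : List α), l = l₁ ++ e :: l₂ → e ∉ B →
      rk (insert e (B ∩ (S ∪ l₁.toFinset))) = rk (B ∩ (S ∪ l₁.toFinset))) →
    greedyL rk l S = B := by
  intro l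
  induction l with
  | nil =>
    intro S B hSB hBS hB hyp
    simp only [List.toFinset_nil, Finset.union_empty] at hBS
    rw [greedyL]
    exact Finset.Subset.antisymm hSB hBS
  | cons x t ih =>
    intro S B hSB hBS hB hyp
    rw [greedyL]
    by_cases hxB : x ∈ B
    · by_cases hxS : x ∈ S
      · rw [if_pos (by rw [Finset.insert_eq_self.2 hxS])]
        refine ih S B hSB ?_ hB ?_
        · intro y hy
          have h' := hBS hy
          simp only [Finset.mem_union, List.toFinset_cons, Finset.mem_insert,
            List.mem_toFinset] at h' ⊢
          rcases h' with h' | (rfl | h')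
          · exact Or.inl h'
          · exact Or.inl hxS
          · exact Or.inr h'
        · intro l₁ e l₂ hdec heB
          have := hyp (x :: l₁) e l₂ (by rw [hdec, List.cons_append]) heB
          have hset : B ∩ (S ∪ (x :: l₁).toFinset) = B ∩ (S ∪ l₁.toFinset) := by
            ext y
            simp only [Finset.mem_inter, Finset.mem_union, List.toFinset_cons,
              Finset.mem_insert, List.mem_toFinset]
            constructor
            · rintro ⟨hyB, hy | (rfl | hy)⟩
              · exact ⟨hyB, Or.inl hy⟩
              · exact ⟨hyB, Or.inl hxS⟩
              · exact ⟨hyB, Or.inr hy⟩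
            · rintro ⟨hyB, hy | hy⟩
              · exact ⟨hyB, Or.inl hy⟩
              · exact ⟨hyB, Or.inr (Or.inr hy)⟩
          rwa [hset] at this
      · -- x ∈ B, x ∉ S : must take the insert branch
        have hnot : ¬ rk (insert x S) = rk S := by
          intro h
          have h2 : rk (insert x (B.erase x)) = rk (B.erase x) :=
            mcr_sp_mono hR1 hR2
              (fun y hy => Finset.mem_erase.2 ⟨fun hyx => hxS (hyx ▸ hy), hSB hy⟩) h
          rw [Finset.insert_erase hxB] at h2
          have h3 : rk (B.erase x) ≤ (B.erase x).card := mcr_rank_le_card hR0 hR3 _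
          have h4 : (B.erase x).card = B.card - 1 := Finset.card_erase_of_mem hxB
          have h5 : 1 ≤ B.card := Finset.card_pos.2 ⟨x, hxB⟩
          omega
        rw [if_neg hnot]
        refine ih (insert x S) B (Finset.insert_subset hxB hSB) ?_ hB ?_
        · intro y hy
          have h' := hBS hy
          simp only [Finset.mem_union, List.toFinset_cons, Finset.mem_insert,
            List.mem_toFinset] at h' ⊢
          tauto
        · intro l₁ e l₂ hdec heB
          have := hyp (x :: l₁) e l₂ (by rw [hdec, List.cons_append]) heB
          have hset : B ∩ (S ∪ (x :: l₁).toFinset) = B ∩ (insert x S ∪ l₁.toFinset) := by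
            ext y
            simp only [Finset.mem_inter, Finset.mem_union, List.toFinset_cons,
              Finset.mem_insert, List.mem_toFinset]
            tauto
          rwa [hset] at this
    · -- x ∉ B: must reject
      have hsp : rk (insert x S) = rk S := by
        have := hyp [] x t rfl hxB
        have hset : B ∩ (S ∪ ([] : List α).toFinset) = S := by
          simp only [List.toFinset_nil, Finset.union_empty]
          exact Finset.inter_eq_right.2 hSB
        rw [hset] at this
        exact this
      rw [if_pos hsp]
      refine ih S B hSB ?_ hB ?_
      · intro y hy
        have h' := hBS hy
        simp only [Finset.mem_union, List.toFinset_cons, Finset.mem_insert,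
          List.mem_toFinset] at h' ⊢
        rcases h' with h' | (rfl | h')
        · exact Or.inl h'
        · exact absurd hy hxB
        · exact Or.inr h'
      · intro l₁ e l₂ hdec heB
        have := hyp (x :: l₁) e l₂ (by rw [hdec, List.cons_append]) heB
        have hset : B ∩ (S ∪ (x :: l₁).toFinset) = B ∩ (S ∪ l₁.toFinset) := by
          ext y
          simp only [Finset.mem_inter, Finset.mem_union, List.toFinset_cons,
            Finset.mem_insert, List.mem_toFinset]
          constructor
          · rintro ⟨hyB, hy | (rfl | hy)⟩
            · exact ⟨hyB, Or.inl hy⟩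
            · exact absurd hyB hxB
            · exact ⟨hyB, Or.inr hy⟩
          · rintro ⟨hyB, hy | hy⟩
            · exact ⟨hyB, Or.inl hy⟩
            · exact ⟨hyB, Or.inr (Or.inr hy)⟩
        rwa [hset] at this


omit hR0 hR1 hR2 hR3


lemma mcr_split_eq {e : α} : ∀ {l₁ m₁ l₂ m₂ : List α}, e ∉ l₁ → e ∉ m₁ →
    l₁ ++ e :: l₂ = m₁ ++ e :: m₂ → l₁ = m₁ := by
  intro l₁
  induction l₁ with
  | nil =>
    intro m₁ l₂ m₂ h1 h2 h
    cases m₁ with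
    | nil => rfl
    | cons y s =>
      simp only [List.nil_append, List.cons_append, List.cons.injEq] at h
      exact absurd (h.1 ▸ List.mem_cons_self : e ∈ y :: s) (h.1 ▸ h2)
  | cons x t ih =>
    intro m₁ l₂ m₂ h1 h2 h
    cases m₁ with
    | nil =>
      simp only [List.cons_append, List.nil_append, List.cons.injEq] at h
      exact absurd (List.mem_cons_self (a := x) (l := t)) (h.1 ▸ h1)
    | cons y s =>
      simp only [List.cons_append, List.cons.injEq] at h
      have := ih (fun hh => h1 (List.mem_cons_of_mem _ hh))
        (fun hh => h2 (List.mem_cons_of_mem _ hh)) h.2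
      rw [h.1, this]

noncomputable def ordList (A : Finset α) : List α :=
  (A.sort (· ≤ ·)).reverse ++ ((Finset.univ \ A).sort (· ≤ ·))

lemma ordList_toFinset (A : Finset α) : (ordList A).toFinset = Finset.univ := by
  ext x
  simp [ordList, Finset.mem_sort]

lemma ordList_nodup (A : Finset α) : (ordList A).Nodup := by
  rw [ordList, List.nodup_append]
  refine ⟨List.nodup_reverse.2 (A.sort_nodup _), (Finset.univ \ A).sort_nodup _, ?_⟩
  intro x hx _ hx' rfl
  rw [List.mem_reverse, Finset.mem_sort] at hx
  rw [Finset.mem_sort, Finset.mem_sdiff] at hx'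
  exact hx'.2 hx

lemma desc_pairwise (A : Finset α) : ((A.sort (· ≤ ·)).reverse).Pairwise (· > ·) := by
  rw [List.pairwise_reverse]
  exact A.sortedLT_sort.pairwise

lemma asc_pairwise (A : Finset α) : ((Finset.univ \ A).sort (· ≤ ·)).Pairwise (· < ·) :=
  (Finset.univ \ A).sortedLT_sort.pairwise

/-- For `e ∈ A`, in any decomposition `ordList A = l₁ ++ e :: l₂`, `l₁` consists exactly
of elements of `A` greater than `e`. -/
lemma ordList_split_mem {A : Finset α} {e : α} (he : e ∈ A) {l₁ l₂ : List α}
    (h : ordList A = l₁ ++ e :: l₂) : l₁.toFinset = A.filter (fun b => e < b) := by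
  have hdesc := desc_pairwise A
  have he' : e ∈ (A.sort (· ≤ ·)).reverse := by
    rw [List.mem_reverse, Finset.mem_sort]; exact he
  obtain ⟨d₁, d₂, hd⟩ := List.append_of_mem he'
  have hord : ordList A = d₁ ++ e :: (d₂ ++ (Finset.univ \ A).sort (· ≤ ·)) := by
    rw [ordList, hd, List.append_assoc, List.cons_append]
  have hnd := ordList_nodup A
  rw [h] at hnd
  have hel₁ : e ∉ l₁ := by
    intro hh
    rw [List.nodup_append] at hnd
    exact hnd.2.2 e hh e List.mem_cons_self rfl
  have hed₁ : e ∉ d₁ := by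
    intro hh
    have hnddesc : ((A.sort (· ≤ ·)).reverse).Nodup := List.nodup_reverse.2 (A.sort_nodup _)
    rw [hd, List.nodup_append] at hnddesc
    exact hnddesc.2.2 e hh e List.mem_cons_self rfl
  have hl₁ : l₁ = d₁ := mcr_split_eq hel₁ hed₁ (by rw [← h, hord])
  subst hl₁
  rw [hd] at hdesc
  rw [List.pairwise_append] at hdesc
  ext x
  simp only [List.mem_toFinset, Finset.mem_filter]
  constructor
  · intro hx
    have hgt : e < x := hdesc.2.2 x hx e List.mem_cons_self
    have : x ∈ (A.sort (· ≤ ·)).reverse := by rw [hd]; simp [hx]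
    rw [List.mem_reverse, Finset.mem_sort] at this
    exact ⟨this, hgt⟩
  · rintro ⟨hxA, hxe⟩
    have hx : x ∈ (A.sort (· ≤ ·)).reverse := by
      rw [List.mem_reverse, Finset.mem_sort]; exact hxA
    rw [hd] at hx
    rcases List.mem_append.1 hx with hx | hx
    · exact hx
    · rcases List.mem_cons.1 hx with rfl | hx
      · exact absurd hxe (lt_irrefl _)
      · have := List.pairwise_cons.1 hdesc.2.1
        exact absurd (this.1 x hx) (not_lt.2 hxe.le)

/-- For `e ∉ A`, in any decomposition `ordList A = l₁ ++ e :: l₂`, `l₁` consists exactly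
of `A` together with the elements outside `A` smaller than `e`. -/
lemma ordList_split_not_mem {A : Finset α} {e : α} (he : e ∉ A) {l₁ l₂ : List α}
    (h : ordList A = l₁ ++ e :: l₂) :
    l₁.toFinset = A ∪ (Finset.univ \ A).filter (fun b => b < e) := by
  have hasc := asc_pairwise A
  have he' : e ∈ (Finset.univ \ A).sort (· ≤ ·) := by
    rw [Finset.mem_sort, Finset.mem_sdiff]; exact ⟨Finset.mem_univ _, he⟩
  obtain ⟨a₁, a₂, ha⟩ := List.append_of_mem he'
  have hord : ordList A = ((A.sort (· ≤ ·)).reverse ++ a₁) ++ e :: a₂ := by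
    rw [ordList, ha, List.append_assoc]
  have hnd := ordList_nodup A
  rw [h] at hnd
  have hel₁ : e ∉ l₁ := by
    intro hh
    rw [List.nodup_append] at hnd
    exact hnd.2.2 e hh e List.mem_cons_self rfl
  have hem₁ : e ∉ (A.sort (· ≤ ·)).reverse ++ a₁ := by
    intro hh
    rcases List.mem_append.1 hh with hh | hh
    · rw [List.mem_reverse, Finset.mem_sort] at hh; exact he hh
    · have hndasc : ((Finset.univ \ A).sort (· ≤ ·)).Nodup := Finset.sort_nodup _ _
      rw [ha, List.nodup_append] at hndasc
      exact hndasc.2.2 e hh e List.mem_cons_self rfl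
  have hl₁ : l₁ = (A.sort (· ≤ ·)).reverse ++ a₁ := mcr_split_eq hel₁ hem₁ (by rw [← h, hord])
  subst hl₁
  rw [ha, List.pairwise_append] at hasc
  ext x
  simp only [List.toFinset_append, Finset.mem_union, List.mem_toFinset, List.mem_reverse,
    Finset.mem_sort, Finset.mem_filter, Finset.mem_sdiff, Finset.mem_univ, true_and]
  constructor
  · rintro (hx | hx)
    · exact Or.inl hx
    · refine Or.inr ⟨?_, hasc.2.2 x hx e List.mem_cons_self⟩
      have : x ∈ (Finset.univ \ A).sort (· ≤ ·) := by rw [ha]; simp [hx]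
      rw [Finset.mem_sort, Finset.mem_sdiff] at this
      exact this.2
  · rintro (hx | ⟨hxA, hxe⟩)
    · exact Or.inl hx
    · right
      have hx : x ∈ (Finset.univ \ A).sort (· ≤ ·) := by
        rw [Finset.mem_sort, Finset.mem_sdiff]; exact ⟨Finset.mem_univ _, hxA⟩
      rw [ha] at hx
      rcases List.mem_append.1 hx with hx | hx
      · exact hx
      · rcases List.mem_cons.1 hx with rfl | hx
        · exact absurd hxe (lt_irrefl _)
        · have := List.pairwise_cons.1 hasc.2.1
          exact absurd (this.1 x hx) (not_lt.2 hxe.le)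


variable (hR0 : rk ∅ = 0)
  (hR1 : ∀ A B : Finset α, A ⊆ B → rk A ≤ rk B)
  (hR2 : ∀ A B : Finset α, rk (A ∪ B) + rk (A ∩ B) ≤ rk A + rk B)
  (hR3 : ∀ (A : Finset α) (e : α), rk (insert e A) ≤ rk A + 1)

noncomputable def phiB (rk : Finset α → ℕ) (A : Finset α) : Finset α :=
  greedyL rk (ordList A) ∅

include hR0 hR1 hR2 hR3

lemma phiB_basis (A : Finset α) : IsBasis rk (phiB rk A) := by
  constructor
  · exact greedy_card hR0 hR1 hR3 _ _ (by simpa using hR0)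
  · have h1 : ∀ x ∈ (Finset.univ : Finset α), rk (insert x (phiB rk A)) = rk (phiB rk A) := by
      intro x _
      refine greedy_spans hR0 hR1 hR2 hR3 _ _ _ ?_
      rw [← List.mem_toFinset, ordList_toFinset]
      exact Finset.mem_univ _
    have h2 := mcr_rank_union_eq hR1 hR2 h1
    rw [Finset.union_comm, Finset.union_eq_left.2 (Finset.subset_univ _)] at h2
    omega

lemma phiB_ext {A : Finset α} {e : α} (heA : e ∈ A) (heB : e ∉ phiB rk A) :
    e ∈ extAct rk (phiB rk A) := by
  have he : e ∈ ordList A := by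
    rw [← List.mem_toFinset, ordList_toFinset]; exact Finset.mem_univ _
  obtain ⟨l₁, l₂, hdec⟩ := List.append_of_mem he
  have hres : e ∉ greedyL rk (l₁ ++ e :: l₂) ∅ := by rwa [← hdec]
  obtain ⟨S', _, hS2, hS3, hS4⟩ := greedy_reject l₁ e l₂ ∅ hres
  rw [← hdec] at hS2
  rw [Finset.empty_union, ordList_split_mem heA hdec] at hS3
  refine Finset.mem_filter.2 ⟨Finset.mem_sdiff.2 ⟨Finset.mem_univ _, heB⟩, ?_⟩
  refine mcr_sp_mono hR1 hR2 ?_ hS4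
  intro x hx
  exact Finset.mem_filter.2 ⟨hS2 hx, (Finset.mem_filter.1 (hS3 hx)).2⟩

lemma phiB_int {A : Finset α} {b : α} (hbB : b ∈ phiB rk A) (hbA : b ∉ A) :
    b ∈ intAct rk (phiB rk A) := by
  have hbasis := phiB_basis hR0 hR1 hR2 hR3 (rk := rk) A
  obtain ⟨hc, hu⟩ := hbasis
  refine Finset.mem_filter.2 ⟨hbB, ?_⟩
  intro f hfb hfbasis
  have hfb' : f ≠ b := ne_of_lt hfb
  have hcard : 1 ≤ (phiB rk A).card := Finset.card_pos.2 ⟨b, hbB⟩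
  have herase : rk ((phiB rk A).erase b) ≤ ((phiB rk A).erase b).card :=
    mcr_rank_le_card hR0 hR3 _
  have hce : ((phiB rk A).erase b).card = (phiB rk A).card - 1 :=
    Finset.card_erase_of_mem hbB
  have key : rk (insert f ((phiB rk A).erase b)) = rk ((phiB rk A).erase b) := by
    by_cases hfB : f ∈ phiB rk A
    · rw [Finset.insert_eq_self.2 (Finset.mem_erase.2 ⟨hfb', hfB⟩)]
    · have hf : f ∈ ordList A := by
        rw [← List.mem_toFinset, ordList_toFinset]; exact Finset.mem_univ _
      obtain ⟨l₁, l₂, hdec⟩ := List.append_of_mem hf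
      have hres : f ∉ greedyL rk (l₁ ++ f :: l₂) ∅ := by rwa [← hdec]
      obtain ⟨S', _, hS2, hS3, hS4⟩ := greedy_reject l₁ f l₂ ∅ hres
      rw [← hdec] at hS2
      rw [Finset.empty_union] at hS3
      refine mcr_sp_mono hR1 hR2 ?_ hS4
      intro x hx
      refine Finset.mem_erase.2 ⟨?_, hS2 hx⟩
      intro hxb
      subst hxb
      by_cases hfA : f ∈ A
      · rw [ordList_split_mem hfA hdec] at hS3
        exact hbA (Finset.mem_filter.1 (hS3 hx)).1
      · rw [ordList_split_not_mem hfA hdec] at hS3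
        rcases Finset.mem_union.1 (hS3 hx) with h' | h'
        · exact hbA h'
        · exact absurd hfb (not_lt.2 (Finset.mem_filter.1 h').2.le)
  have : rk (insert f ((phiB rk A).erase b)) = rk Finset.univ := hfbasis.2
  omega

/-- Uniqueness: any basis compatible with `A` equals `phiB rk A`. -/
lemma phiB_unique {A B : Finset α} (hB : IsBasis rk B)
    (hint : B \ A ⊆ intAct rk B) (hext : A \ B ⊆ extAct rk B) :
    phiB rk A = B := by
  show greedyL rk (ordList A) ∅ = B
  refine greedy_eq hR0 hR1 hR2 hR3 (ordList A) ∅ B (Finset.empty_subset _) ?_ hB.1 ?_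
  · rw [ordList_toFinset, Finset.empty_union]; exact Finset.subset_univ _
  · intro l₁ e l₂ hdec heB
    rw [Finset.empty_union]
    by_cases heA : e ∈ A
    · -- e is externally active for B
      have heext : e ∈ extAct rk B := hext (Finset.mem_sdiff.2 ⟨heA, heB⟩)
      have hsp : rk (insert e (B.filter (fun b => e < b))) = rk (B.filter (fun b => e < b)) :=
        (Finset.mem_filter.1 heext).2
      have hrem := mcr_removal_all hR0 hR1 hR2 hR3 hB.1 heB ((B \ A).filter (fun b => e < b))
        (B.filter (fun b => e < b)) (Finset.filter_subset _ _) ?_ hsp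
      · refine mcr_sp_mono hR1 hR2 ?_ hrem
        intro x hx
        have hx' := Finset.mem_sdiff.1 hx
        have hxB := (Finset.mem_filter.1 hx'.1).1
        have hxe := (Finset.mem_filter.1 hx'.1).2
        have hx2 := hx'.2
        have hxA : x ∈ A := by
          by_contra hxA
          exact hx2 (Finset.mem_filter.2 ⟨Finset.mem_sdiff.2 ⟨hxB, hxA⟩, hxe⟩)
        rw [ordList_split_mem heA hdec]
        exact Finset.mem_inter.2 ⟨hxB, Finset.mem_filter.2 ⟨hxA, hxe⟩⟩
      · intro d hd hdS
        rw [Finset.mem_filter, Finset.mem_sdiff] at hd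
        have hdint : d ∈ intAct rk B := hint (Finset.mem_sdiff.2 hd.1)
        have := (Finset.mem_filter.1 hdint).2 e hd.2
        exact mcr_spans_of_not_basis hR0 hR1 hR2 hR3 hB hd.1.1
          (fun h => heB (h ▸ hd.1.1)) this
    · -- e ∉ A, e ∉ B
      have hsp : rk (insert e B) = rk B := by
        have h1 : rk (insert e B) ≤ rk Finset.univ := hR1 _ _ (Finset.subset_univ _)
        have h2 : rk B ≤ rk (insert e B) := hR1 _ _ (Finset.subset_insert _ _)
        have := hB.2
        omega
      have hrem := mcr_removal_all hR0 hR1 hR2 hR3 hB.1 heB ((B \ A).filter (fun b => e < b))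
        B (Finset.Subset.refl _) ?_ hsp
      · refine mcr_sp_mono hR1 hR2 ?_ hrem
        intro x hx
        have hx' := Finset.mem_sdiff.1 hx
        have hxB := hx'.1
        have hx2 := hx'.2
        rw [ordList_split_not_mem heA hdec]
        refine Finset.mem_inter.2 ⟨hxB, ?_⟩
        by_cases hxA : x ∈ A
        · exact Finset.mem_union_left _ hxA
        · refine Finset.mem_union_right _ (Finset.mem_filter.2
            ⟨Finset.mem_sdiff.2 ⟨Finset.mem_univ _, hxA⟩, ?_⟩)
          have hxe : ¬ e < x := fun h =>
            hx2 (Finset.mem_filter.2 ⟨Finset.mem_sdiff.2 ⟨hxB, hxA⟩, h⟩)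
          have hne : x ≠ e := fun h => heB (h ▸ hxB)
          exact lt_of_le_of_ne (not_lt.1 hxe) hne
      · intro d hd hdS
        rw [Finset.mem_filter, Finset.mem_sdiff] at hd
        have hdint : d ∈ intAct rk B := hint (Finset.mem_sdiff.2 hd.1)
        have := (Finset.mem_filter.1 hdint).2 e hd.2
        exact mcr_spans_of_not_basis hR0 hR1 hR2 hR3 hB hd.1.1
          (fun h => heB (h ▸ hd.1.1)) this


lemma mcr_rank_interval {B S T : Finset α} (hB : IsBasis rk B)
    (hS : S ⊆ intAct rk B) (hT : T ⊆ extAct rk B) :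
    rk ((B \ S) ∪ T) = B.card - S.card := by
  have hSB : S ⊆ B := hS.trans (Finset.filter_subset _ _)
  have key : ∀ t ∈ T, rk (insert t (B \ S)) = rk (B \ S) := by
    intro t ht
    have htext : t ∈ extAct rk B := hT ht
    have htB : t ∉ B := (Finset.mem_sdiff.1 (Finset.mem_filter.1 htext).1).2
    have hsp : rk (insert t (B.filter (fun b => t < b))) = rk (B.filter (fun b => t < b)) :=
      (Finset.mem_filter.1 htext).2
    have hrem := mcr_removal_all hR0 hR1 hR2 hR3 hB.1 htB S
      (B.filter (fun b => t < b)) (Finset.filter_subset _ _) ?_ hsp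
    · refine mcr_sp_mono hR1 hR2 ?_ hrem
      intro x hx
      have hx' := Finset.mem_sdiff.1 hx
      exact Finset.mem_sdiff.2 ⟨(Finset.mem_filter.1 hx'.1).1, hx'.2⟩
    · intro d hd hdS
      have hdint : d ∈ intAct rk B := hS hd
      have hdB : d ∈ B := hSB hd
      have htd : t < d := (Finset.mem_filter.1 hdS).2
      have := (Finset.mem_filter.1 hdint).2 t htd
      exact mcr_spans_of_not_basis hR0 hR1 hR2 hR3 hB hdB (fun h => htB (h ▸ hdB)) this
  have h1 : rk ((B \ S) ∪ T) = rk (B \ S) := mcr_rank_union_eq hR1 hR2 key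
  have h2 : rk (B \ S) = (B \ S).card :=
    mcr_indep_subset hR0 hR1 hR3 hB.1 (Finset.sdiff_subset)
  rw [h1, h2, Finset.card_sdiff_of_subset hSB]

lemma mcr_fiber_eq {B : Finset α} (hB : IsBasis rk B) :
    Finset.univ.filter (fun A => phiB rk A = B) =
      ((intAct rk B).powerset ×ˢ (extAct rk B).powerset).image
        (fun p : Finset α × Finset α => (B \ p.1) ∪ p.2) := by
  ext A
  simp only [Finset.mem_filter, Finset.mem_univ, true_and, Finset.mem_image,
    Finset.mem_product, Finset.mem_powerset]
  constructor
  · intro hphi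
    refine ⟨(B \ A, A \ B), ⟨?_, ?_⟩, ?_⟩
    · intro x hx
      have hx' := Finset.mem_sdiff.1 hx
      have := phiB_int hR0 hR1 hR2 hR3 (A := A) (b := x) (by rw [hphi]; exact hx'.1) hx'.2
      rwa [hphi] at this
    · intro x hx
      have hx' := Finset.mem_sdiff.1 hx
      have := phiB_ext hR0 hR1 hR2 hR3 (A := A) (e := x) hx'.1 (by rw [hphi]; exact hx'.2)
      rwa [hphi] at this
    · ext x
      simp only [Finset.mem_union, Finset.mem_sdiff]
      tauto
  · rintro ⟨⟨S, T⟩, ⟨hS, hT⟩, rfl⟩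
    refine phiB_unique hR0 hR1 hR2 hR3 hB ?_ ?_
    · intro x hx
      have hx' := Finset.mem_sdiff.1 hx
      simp only [Finset.mem_union, Finset.mem_sdiff, not_or, not_and, not_not] at hx'
      exact hS (hx'.2.1 hx'.1)
    · intro x hx
      have hx' := Finset.mem_sdiff.1 hx
      rcases Finset.mem_union.1 hx'.1 with h' | h'
      · exact absurd (Finset.mem_sdiff.1 h').1 hx'.2
      · exact hT h'

lemma mcr_inj {B : Finset α} (hB : IsBasis rk B) :
    ∀ p ∈ ((intAct rk B).powerset ×ˢ (extAct rk B).powerset),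
    ∀ p' ∈ ((intAct rk B).powerset ×ˢ (extAct rk B).powerset),
    (B \ p.1) ∪ p.2 = (B \ p'.1) ∪ p'.2 → p = p' := by
  have hrec : ∀ p ∈ ((intAct rk B).powerset ×ˢ (extAct rk B).powerset),
      B \ ((B \ p.1) ∪ p.2) = p.1 ∧ ((B \ p.1) ∪ p.2) \ B = p.2 := by
    rintro ⟨S, T⟩ hp
    rw [Finset.mem_product, Finset.mem_powerset, Finset.mem_powerset] at hp
    have hSB : S ⊆ B := hp.1.trans (Finset.filter_subset _ _)
    have hTB : ∀ x ∈ T, x ∉ B := fun x hx =>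
      (Finset.mem_sdiff.1 (Finset.mem_filter.1 (hp.2 hx)).1).2
    constructor
    · ext x
      simp only [Finset.mem_sdiff, Finset.mem_union, not_or, not_and, not_not]
      constructor
      · rintro ⟨hxB, h1, h2⟩
        exact h1 hxB
      · intro hxS
        exact ⟨hSB hxS, fun _ => hxS, fun hxT => hTB x hxT (hSB hxS)⟩
    · ext x
      simp only [Finset.mem_sdiff, Finset.mem_union]
      constructor
      · rintro ⟨h1 | h1, h2⟩
        · exact absurd h1.1 h2
        · exact h1
      · intro hxT
        exact ⟨Or.inr hxT, hTB x hxT⟩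
  intro p hp p' hp' heq
  have h1 := hrec p hp
  have h2 := hrec p' hp'
  have e1 : p.1 = p'.1 := by rw [← h1.1, ← h2.1, heq]
  have e2 : p.2 = p'.2 := by rw [← h1.2, ← h2.2, heq]
  exact Prod.ext e1 e2

end crapoAux

/-- Crapo's theorem for the multivariate Tutte polynomial:
`Z(q,v) = q^{-rk(E)} Σ_{B basis} (Π_{b∈B} v_b)(Π_{e∈E(B)}(v_e+1))(Π_{i∈I(B)}(q/v_i+1))`. -/
theorem multivariate_crapo {α : Type*} [Fintype α] [LinearOrder α]
    (rk : Finset α → ℕ)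
    (hR0 : rk ∅ = 0)
    (hR1 : ∀ A B : Finset α, A ⊆ B → rk A ≤ rk B)
    (hR2 : ∀ A B : Finset α, rk (A ∪ B) + rk (A ∩ B) ≤ rk A + rk B)
    (hR3 : ∀ (A : Finset α) (e : α), rk (insert e A) ≤ rk A + 1)
    (q : ℚ) (hq : q ≠ 0) (v : α → ℚ) (hv : ∀ e, v e ≠ 0) :
    ∑ A : Finset α, q ^ (-(rk A : ℤ)) * ∏ e ∈ A, v e =
      q ^ (-(rk (Finset.univ : Finset α) : ℤ)) *
        ∑ B ∈ Finset.univ.filter (fun B : Finset α => IsBasis rk B),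
          (∏ b ∈ B, v b) * (∏ e ∈ extAct rk B, (v e + 1)) *
            (∏ i ∈ intAct rk B, (q / v i + 1)) := by
  classical
  have hmaps : ∀ A ∈ (Finset.univ : Finset (Finset α)),
      phiB rk A ∈ Finset.univ.filter (fun B : Finset α => IsBasis rk B) :=
    fun A _ => Finset.mem_filter.2 ⟨Finset.mem_univ _, phiB_basis hR0 hR1 hR2 hR3 A⟩
  rw [← Finset.sum_fiberwise_of_maps_to hmaps
    (fun A => q ^ (-(rk A : ℤ)) * ∏ e ∈ A, v e), Finset.mul_sum]
  refine Finset.sum_congr rfl ?_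
  intro B hBmem
  have hB : IsBasis rk B := (Finset.mem_filter.1 hBmem).2
  rw [mcr_fiber_eq hR0 hR1 hR2 hR3 hB,
    Finset.sum_image (mcr_inj hR0 hR1 hR2 hR3 hB)]
  have hBcard : B.card = rk Finset.univ := by
    have := hB.1; have := hB.2; omega
  have hterm : ∀ p ∈ ((intAct rk B).powerset ×ˢ (extAct rk B).powerset),
      q ^ (-(rk ((B \ p.1) ∪ p.2) : ℤ)) * ∏ e ∈ (B \ p.1) ∪ p.2, v e
      = (q ^ (-(rk (Finset.univ : Finset α) : ℤ)) *
          (q ^ p.1.card * ∏ e ∈ B \ p.1, v e)) * ∏ e ∈ p.2, v e := by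
    rintro ⟨S, T⟩ hp
    rw [Finset.mem_product, Finset.mem_powerset, Finset.mem_powerset] at hp
    have hSB : S ⊆ B := hp.1.trans (Finset.filter_subset _ _)
    have hScard : S.card ≤ B.card := Finset.card_le_card hSB
    have hrk : rk ((B \ S) ∪ T) = B.card - S.card :=
      mcr_rank_interval hR0 hR1 hR2 hR3 hB hp.1 hp.2
    have hdisj : Disjoint (B \ S) T := by
      rw [Finset.disjoint_left]
      intro x hx hxT
      exact (Finset.mem_sdiff.1 (Finset.mem_filter.1 (hp.2 hxT)).1).2
        (Finset.mem_sdiff.1 hx).1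
    have hcast : (-(rk ((B \ S) ∪ T) : ℤ)) =
        (-(rk (Finset.univ : Finset α) : ℤ)) + (S.card : ℤ) := by
      rw [hrk, Nat.cast_sub hScard]
      omega
    rw [Finset.prod_union hdisj, hcast, zpow_add₀ hq, zpow_natCast]
    ring
  rw [Finset.sum_congr rfl hterm, Finset.sum_product]
  have hsumT : ∑ T ∈ (extAct rk B).powerset, ∏ e ∈ T, v e =
      ∏ e ∈ extAct rk B, (v e + 1) := by
    rw [Finset.prod_add]
    exact Finset.sum_congr rfl (fun T _ => by rw [Finset.prod_const_one, mul_one])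
  have hsumS : ∑ S ∈ (intAct rk B).powerset, q ^ S.card * ∏ e ∈ B \ S, v e =
      (∏ b ∈ B, v b) * ∏ i ∈ intAct rk B, (q / v i + 1) := by
    rw [Finset.prod_add, Finset.mul_sum]
    refine Finset.sum_congr rfl ?_
    intro S hS
    rw [Finset.mem_powerset] at hS
    have hSB : S ⊆ B := hS.trans (Finset.filter_subset _ _)
    rw [Finset.prod_const_one, mul_one, ← Finset.prod_sdiff hSB, mul_assoc,
      ← Finset.prod_mul_distrib]
    have hq' : ∀ s ∈ S, v s * (q / v s) = q := by
      intro s _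
      rw [mul_comm, div_mul_cancel₀ q (hv s)]
    rw [Finset.prod_congr rfl hq', Finset.prod_const]
    ring
  calc ∑ S ∈ (intAct rk B).powerset, ∑ T ∈ (extAct rk B).powerset,
        (q ^ (-(rk (Finset.univ : Finset α) : ℤ)) *
          (q ^ S.card * ∏ e ∈ B \ S, v e)) * ∏ e ∈ T, v e
      = (∑ S ∈ (intAct rk B).powerset, q ^ (-(rk (Finset.univ : Finset α) : ℤ)) *
          (q ^ S.card * ∏ e ∈ B \ S, v e)) *
        (∑ T ∈ (extAct rk B).powerset, ∏ e ∈ T, v e) := by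
        rw [Finset.sum_mul_sum]
    _ = q ^ (-(rk (Finset.univ : Finset α) : ℤ)) *
        ((∏ b ∈ B, v b) * (∏ e ∈ extAct rk B, (v e + 1)) *
          ∏ i ∈ intAct rk B, (q / v i + 1)) := by
        rw [← Finset.mul_sum, hsumS, hsumT]
        ring
end
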